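/- Let A_1, …, A_n (n ≥ 2) be positive semidefinite real symmetric matrices with A_1 + ⋯ + A_n ⪯ n·I. Then −(1/4)·n(n-1)·I ⪯ Σ_{i≠j} A_i A_j. -/

import Mathlib

open Matrix Finset

lemma psd_smul' {d : ℕ} {c : ℝ} (hc : 0 ≤ c) {M : Matrix (Fin d) (Fin d) ℝ}
    (hM : M.PosSemidef) : (c • M).PosSemidef := by
  refine .of_dotProduct_mulVec_nonneg ?_ (fun x => ?_)
  · unfold Matrix.IsHermitian
    rw [conjTranspose_smul, hM.1.eq]
    simp
  · rw [smul_mulVec, dotProduct_smul, smul_eq_mul]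
    exact mul_nonneg hc (hM.dotProduct_mulVec_nonneg x)

lemma qf_symm {d : ℕ} {M : Matrix (Fin d) (Fin d) ℝ} (hM : M.IsHermitian) (x y : Fin d → ℝ) :
    x ⬝ᵥ M *ᵥ y = y ⬝ᵥ M *ᵥ x := by
  rw [dotProduct_mulVec, dotProduct_comm]
  congr 1
  rw [← vecMul_transpose, ← conjTranspose_eq_transpose_of_trivial, hM.eq]

lemma pair_psd {d : ℕ} {nr : ℝ} (hn : 0 < nr) {C D : Matrix (Fin d) (Fin d) ℝ}
    (hC : C.IsHermitian) (hD : D.IsHermitian)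
    (h1 : (C + D).PosSemidef) (h2 : (C - D).PosSemidef)
    (h3 : (nr • (1 : Matrix (Fin d) (Fin d) ℝ) - C).PosSemidef) :
    (nr • C - D * D).PosSemidef := by
  have hDD : (D * D).IsHermitian := by
    unfold Matrix.IsHermitian
    rw [conjTranspose_mul, hD.eq]
  have hCs : ((nr : ℝ) • C).IsHermitian := by
    unfold Matrix.IsHermitian
    rw [conjTranspose_smul, hC.eq]
    simp
  refine .of_dotProduct_mulVec_nonneg (hCs.sub hDD) (fun x => ?_)
  set y := D *ᵥ x with hy
  have e1 := h1.dotProduct_mulVec_nonneg (nr • x - y)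
  have e2 := h2.dotProduct_mulVec_nonneg (nr • x + y)
  have e3 := h3.dotProduct_mulVec_nonneg y
  simp only [star_trivial, add_mulVec, sub_mulVec, mulVec_add, mulVec_sub, mulVec_smul,
    smul_mulVec, dotProduct_add, dotProduct_sub, add_dotProduct, sub_dotProduct,
    smul_dotProduct, dotProduct_smul, smul_eq_mul, one_mulVec] at e1 e2 e3 ⊢
  have hsymC : y ⬝ᵥ C *ᵥ x = x ⬝ᵥ C *ᵥ y := qf_symm hC y x
  have hsymD : y ⬝ᵥ D *ᵥ x = x ⬝ᵥ D *ᵥ y := qf_symm hD y x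
  have hq : x ⬝ᵥ D *ᵥ y = x ⬝ᵥ (D * D) *ᵥ x := by rw [hy, mulVec_mulVec]
  have hs : y ⬝ᵥ y = x ⬝ᵥ (D * D) *ᵥ x := by
    rw [← hq, hy]
    exact qf_symm hD (D *ᵥ x) x ▸ rfl
  nlinarith [e1, e2, e3, hn, mul_pos hn hn]

lemma offdiag_sum {n d : ℕ} (f : Fin n → Fin n → Matrix (Fin d) (Fin d) ℝ) :
    ∑ p ∈ Finset.univ.filter (fun p : Fin n × Fin n => p.1 ≠ p.2), f p.1 p.2
      = (∑ i, ∑ j, f i j) - ∑ i, f i i := by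
  have h0 := Finset.sum_filter_add_sum_filter_not Finset.univ
      (fun p : Fin n × Fin n => p.1 ≠ p.2) (fun p => f p.1 p.2)
  have h1 : ∑ p : Fin n × Fin n, f p.1 p.2 = ∑ i, ∑ j, f i j :=
    Fintype.sum_prod_type _
  have h2 : ∑ p ∈ Finset.univ.filter (fun p : Fin n × Fin n => ¬ p.1 ≠ p.2), f p.1 p.2
      = ∑ i, f i i := by
    rw [Finset.sum_filter, Fintype.sum_prod_type]
    simp
  rw [h2, h1] at h0
  exact eq_sub_of_add_eq h0

theorem stmt7 {d n : ℕ} (hn : 2 ≤ n) (A : Fin n → Matrix (Fin d) (Fin d) ℝ)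
    (hA : ∀ i, (A i).PosSemidef)
    (hsum : ((n : ℝ) • (1 : Matrix (Fin d) (Fin d) ℝ) - ∑ i, A i).PosSemidef) :
    ((∑ p ∈ Finset.univ.filter (fun p : Fin n × Fin n => p.1 ≠ p.2), A p.1 * A p.2) -
      (-(1 / 4 * (n : ℝ) * ((n : ℝ) - 1))) • (1 : Matrix (Fin d) (Fin d) ℝ)).PosSemidef := by
  have hn2 : (2:ℝ) ≤ (n:ℝ) := by exact_mod_cast hn
  have hnR : (0:ℝ) < (n:ℝ) := by linarith
  have hne : (n:ℝ) ≠ 0 := ne_of_gt hnR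
  -- sum pieces
  have p1 : ∑ i, ∑ j, A i * A j = (∑ i, A i) * (∑ i, A i) := (Finset.sum_mul_sum _ _ _ _).symm
  have p2 : ∑ i : Fin n, ∑ _j : Fin n, A i * A i = (n:ℝ) • ∑ i, A i * A i := by
    simp only [Finset.sum_const, Finset.card_univ, Fintype.card_fin, ← Finset.smul_sum]
    rw [Nat.cast_smul_eq_nsmul]
  have p3 : ∑ i, ∑ j, A j * A i = (∑ i, A i) * (∑ i, A i) := by
    rw [Finset.sum_comm]; exact (Finset.sum_mul_sum _ _ _ _).symm
  have p4 : ∑ _i : Fin n, ∑ j : Fin n, A j * A j = (n:ℝ) • ∑ i, A i * A i := by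
    simp only [Finset.sum_const, Finset.card_univ, Fintype.card_fin]
    rw [Nat.cast_smul_eq_nsmul]
  have p5 : ∑ i : Fin n, ∑ j : Fin n, (A i + A j)
      = (n:ℝ) • (∑ i, A i) + (n:ℝ) • (∑ i, A i) := by
    simp only [Finset.sum_add_distrib, Finset.sum_const, Finset.card_univ, Fintype.card_fin,
      ← Finset.smul_sum]
    rw [Nat.cast_smul_eq_nsmul]
  have e_mul : ∑ p ∈ Finset.univ.filter (fun p : Fin n × Fin n => p.1 ≠ p.2), A p.1 * A p.2
      = (∑ i, A i) * (∑ i, A i) - ∑ i, A i * A i := by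
    rw [offdiag_sum (fun i j => A i * A j), p1]
  have e_P : ∑ p ∈ Finset.univ.filter (fun p : Fin n × Fin n => p.1 ≠ p.2),
        ((n:ℝ) • (A p.1 + A p.2) - (A p.1 - A p.2) * (A p.1 - A p.2))
      = ((n:ℝ) • ((n:ℝ) • (∑ i, A i) + (n:ℝ) • (∑ i, A i))
          - (((n:ℝ) • (∑ i, A i * A i) - (∑ i, A i) * (∑ i, A i))
              - ((∑ i, A i) * (∑ i, A i) - (n:ℝ) • (∑ i, A i * A i))))
        - (n:ℝ) • ((∑ i, A i) + (∑ i, A i)) := by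
    rw [offdiag_sum (fun i j => (n:ℝ) • (A i + A j) - (A i - A j) * (A i - A j))]
    have hpt : ∀ i j : Fin n, (n:ℝ) • (A i + A j) - (A i - A j) * (A i - A j)
        = (n:ℝ) • (A i + A j) - (A i * A i - A i * A j - (A j * A i - A j * A j)) := by
      intro i j
      congr 1
      noncomm_ring
    simp only [hpt]
    congr 1
    · simp only [Finset.sum_sub_distrib, ← Finset.smul_sum]
      rw [p5, p1, p2, p3, p4]
    · simp [Finset.sum_add_distrib, Finset.smul_sum]
  -- hermitians
  have hSh : (∑ i, A i).IsHermitian := by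
    unfold Matrix.IsHermitian
    rw [conjTranspose_sum]
    exact Finset.sum_congr rfl (fun i _ => (hA i).1)
  have hTh : ((∑ i, A i) - ((n:ℝ)/2) • (1 : Matrix (Fin d) (Fin d) ℝ)).IsHermitian := by
    refine hSh.sub ?_
    unfold Matrix.IsHermitian
    rw [conjTranspose_smul]
    simp
  have psdT2 : ((((∑ i, A i) - ((n:ℝ)/2) • (1 : Matrix (Fin d) (Fin d) ℝ))) *
      (((∑ i, A i) - ((n:ℝ)/2) • (1 : Matrix (Fin d) (Fin d) ℝ)))).PosSemidef := by
    have h := posSemidef_conjTranspose_mul_self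
      ((∑ i, A i) - ((n:ℝ)/2) • (1 : Matrix (Fin d) (Fin d) ℝ))
    rwa [hTh.eq] at h
  -- each pair term is PSD
  have key : ∀ p ∈ Finset.univ.filter (fun p : Fin n × Fin n => p.1 ≠ p.2),
      ((n:ℝ) • (A p.1 + A p.2) - (A p.1 - A p.2) * (A p.1 - A p.2)).PosSemidef := by
    intro p hp
    have hpne : p.1 ≠ p.2 := (Finset.mem_filter.mp hp).2
    refine pair_psd hnR ((hA p.1).1.add (hA p.2).1) ((hA p.1).1.sub (hA p.2).1) ?_ ?_ ?_
    · have h : (A p.1 + A p.2) + (A p.1 - A p.2) = A p.1 + A p.1 := by abel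
      rw [h]; exact (hA p.1).add (hA p.1)
    · have h : (A p.1 + A p.2) - (A p.1 - A p.2) = A p.2 + A p.2 := by abel
      rw [h]; exact (hA p.2).add (hA p.2)
    · have hsub : ({p.1, p.2} : Finset (Fin n)) ⊆ Finset.univ := Finset.subset_univ _
      have h1 : ∑ k ∈ Finset.univ \ {p.1, p.2}, A k + ∑ k ∈ ({p.1, p.2} : Finset (Fin n)), A k
          = ∑ i, A i := Finset.sum_sdiff hsub
      have h2 : ∑ k ∈ ({p.1, p.2} : Finset (Fin n)), A k = A p.1 + A p.2 :=
        Finset.sum_pair hpne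
      rw [h2] at h1
      have hsplit : (n:ℝ) • (1 : Matrix (Fin d) (Fin d) ℝ) - (A p.1 + A p.2)
          = ((n:ℝ) • 1 - ∑ i, A i) + ∑ k ∈ Finset.univ \ {p.1, p.2}, A k := by
        rw [← h1]; abel
      rw [hsplit]
      exact hsum.add (Finset.sum_induction _ _ (fun a b ha hb => ha.add hb)
        Matrix.PosSemidef.zero (fun k _ => hA k))
  have psdP : (∑ p ∈ Finset.univ.filter (fun p : Fin n × Fin n => p.1 ≠ p.2),
      ((n:ℝ) • (A p.1 + A p.2) - (A p.1 - A p.2) * (A p.1 - A p.2))).PosSemidef :=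
    Finset.sum_induction _ _ (fun a b ha hb => ha.add hb) Matrix.PosSemidef.zero key
  -- final algebraic identity
  have expand : (((∑ i, A i) - ((n:ℝ)/2) • (1 : Matrix (Fin d) (Fin d) ℝ)) *
        ((∑ i, A i) - ((n:ℝ)/2) • (1 : Matrix (Fin d) (Fin d) ℝ)))
      = (∑ i, A i) * (∑ i, A i) - ((n:ℝ)/2) • (∑ i, A i) - ((n:ℝ)/2) • (∑ i, A i)
        + (((n:ℝ)/2)*((n:ℝ)/2)) • (1 : Matrix (Fin d) (Fin d) ℝ) := by
    simp only [mul_sub, sub_mul, smul_mul_assoc, mul_smul_comm, smul_smul, mul_one, one_mul]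
    module
  have final : (∑ p ∈ Finset.univ.filter (fun p : Fin n × Fin n => p.1 ≠ p.2), A p.1 * A p.2) -
        (-(1 / 4 * (n : ℝ) * ((n : ℝ) - 1))) • (1 : Matrix (Fin d) (Fin d) ℝ)
      = (((n:ℝ)-1)/(n:ℝ)) • (((∑ i, A i) - ((n:ℝ)/2) • (1 : Matrix (Fin d) (Fin d) ℝ)) *
            ((∑ i, A i) - ((n:ℝ)/2) • (1 : Matrix (Fin d) (Fin d) ℝ)))
        + (1/(2*(n:ℝ))) • (∑ p ∈ Finset.univ.filter (fun p : Fin n × Fin n => p.1 ≠ p.2),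
            ((n:ℝ) • (A p.1 + A p.2) - (A p.1 - A p.2) * (A p.1 - A p.2))) := by
    rw [e_mul, e_P, expand]
    match_scalars <;> (field_simp; try ring)
  rw [final]
  have hc1 : (0:ℝ) ≤ ((n:ℝ)-1)/(n:ℝ) := by
    apply div_nonneg _ (le_of_lt hnR)
    linarith
  have hc2 : (0:ℝ) ≤ 1/(2*(n:ℝ)) := by positivity
  exact (psd_smul' hc1 psdT2).add (psd_smul' hc2 psdP)
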